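/- arXiv:2410.10322 — 3 statements merged into one kernel-verified Lean document; each statement's English description precedes it below -/
import Mathlib

section
/- (Clean accuracy of the feature-averaging network) Let d, k ≥ 1 with d ≥ 2 and 2k · ln d < √d, let μ : Fin k → ℝ^d be orthogonal equinorm cluster features with binary cluster labels s. Then the feature-averaging network f_FA classifies a fresh data point correctly with high probability: the probability over (J, ξ) ~ (uniform on Fin k) ⊗ γ_d that sgn(f_FA(μ_J + ξ)) = s J is at least 1 − 2k · d^{−(ln d)/2}. -/
set_option maxHeartbeats 1000000

open MeasureTheory ProbabilityTheory Real Finset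
open scoped RealInnerProductSpace

/-- The standard Gaussian measure on `ℝ^d`. -/
noncomputable def stdGaussian (d : ℕ) : Measure (EuclideanSpace ℝ (Fin d)) :=
  (Measure.pi fun _ : Fin d => gaussianReal 0 1).map (MeasurableEquiv.toLp 2 (Fin d → ℝ))

/-- The sign function: `1` on positive reals, `-1` otherwise. -/
noncomputable def sgn (z : ℝ) : ℝ := if 0 < z then 1 else -1

/-- The ReLU activation. -/
noncomputable def relu (z : ℝ) : ℝ := max z 0

/-- The feature-averaging network. -/
noncomputable def fFA {d k : ℕ} (μ : Fin k → EuclideanSpace ℝ (Fin d)) (s : Fin k → ℝ)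
    (x : EuclideanSpace ℝ (Fin d)) : ℝ :=
  relu ⟪∑ j ∈ univ.filter (fun j => s j = 1), μ j, x⟫ -
    relu ⟪∑ j ∈ univ.filter (fun j => s j = -1), μ j, x⟫

instance (d : ℕ) : IsProbabilityMeasure (stdGaussian d) := by
  unfold _root_.stdGaussian
  exact Measure.isProbabilityMeasure_map (MeasurableEquiv.toLp 2 (Fin d → ℝ)).measurable.aemeasurable

lemma exp_quad_eq (c x : ℝ) :
    gaussianPDFReal 0 1 x * Real.exp (c * x)
      = (Real.sqrt (2 * π))⁻¹ * Real.exp (c ^ 2 / 2) * Real.exp (-(1/2) * (x - c) ^ 2) := by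
  unfold gaussianPDFReal
  push_cast
  rw [mul_one, mul_assoc, ← Real.exp_add, mul_assoc, ← Real.exp_add, sub_zero]
  ring_nf

lemma integrable_exp_shift (c : ℝ) :
    Integrable (fun x : ℝ => Real.exp (-(1/2) * (x - c) ^ 2)) volume :=
  (integrable_exp_neg_mul_sq (by norm_num : (0:ℝ) < 1/2)).comp_sub_right c

lemma integral_exp_shift (c : ℝ) :
    ∫ x : ℝ, Real.exp (-(1/2) * (x - c) ^ 2) = Real.sqrt (2 * π) := by
  rw [integral_sub_right_eq_self (μ := volume) (fun a => Real.exp (-(1/2) * a ^ 2)) c]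
  rw [integral_gaussian (1/2)]
  rw [show π / (1/2 : ℝ) = 2 * π by ring]

lemma gaussianReal_eq_withDensity :
    gaussianReal 0 1 = volume.withDensity fun x => ((gaussianPDFReal 0 1 x).toNNReal : ENNReal) :=
  gaussianReal_of_var_ne_zero 0 one_ne_zero

lemma integral_exp_mul_gaussianReal (c : ℝ) :
    ∫ x : ℝ, Real.exp (c * x) ∂(gaussianReal 0 1) = Real.exp (c ^ 2 / 2) := by
  rw [gaussianReal_eq_withDensity,
    integral_withDensity_eq_integral_smul
      ((measurable_gaussianPDFReal 0 1).real_toNNReal) (fun x => Real.exp (c * x))]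
  have h : ∀ x : ℝ, (gaussianPDFReal 0 1 x).toNNReal • Real.exp (c * x)
      = (Real.sqrt (2 * π))⁻¹ * Real.exp (c ^ 2 / 2) * Real.exp (-(1/2) * (x - c) ^ 2) := by
    intro x
    rw [NNReal.smul_def, Real.coe_toNNReal _ (gaussianPDFReal_nonneg 0 1 x), smul_eq_mul, exp_quad_eq]
  simp_rw [h]
  rw [integral_const_mul, integral_exp_shift]
  rw [mul_comm, ← mul_assoc, mul_inv_cancel₀ (by positivity : Real.sqrt (2 * π) ≠ 0), one_mul]

lemma integrable_exp_mul_gaussianReal (c : ℝ) :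
    Integrable (fun x : ℝ => Real.exp (c * x)) (gaussianReal 0 1) := by
  rw [gaussianReal_eq_withDensity]
  rw [integrable_withDensity_iff ((measurable_gaussianPDFReal 0 1).real_toNNReal.coe_nnreal_ennreal)
    (Filter.Eventually.of_forall fun x => ENNReal.coe_lt_top)]
  have h : ∀ x : ℝ, Real.exp (c * x) * ((gaussianPDFReal 0 1 x).toNNReal : ENNReal).toReal
      = (Real.sqrt (2 * π))⁻¹ * Real.exp (c ^ 2 / 2) * Real.exp (-(1/2) * (x - c) ^ 2) := by
    intro x
    rw [ENNReal.coe_toReal, Real.coe_toNNReal _ (gaussianPDFReal_nonneg 0 1 x), mul_comm,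
      exp_quad_eq]
  simp_rw [h]
  exact (integrable_exp_shift c).const_mul _

lemma my_integrable_pi_prod {n : ℕ} (μ : Measure ℝ) [IsProbabilityMeasure μ]
    (f : Fin n → ℝ → ℝ) (hf : ∀ i, Integrable (f i) μ) :
    Integrable (fun x : Fin n → ℝ => ∏ i, f i (x i)) (Measure.pi fun _ => μ) := by
  induction n with
  | zero =>
      simp only [Finset.univ_eq_empty, Finset.prod_empty]
      exact integrable_const 1
  | succ n n_ih =>
      have A := ((measurePreserving_piFinSuccAbove (fun _ : Fin (n + 1) => μ) 0).symm)
      rw [← A.integrable_comp_emb (MeasurableEquiv.measurableEmbedding _)]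
      simp_rw [MeasurableEquiv.piFinSuccAbove_symm_apply, Fin.insertNthEquiv,
        Fin.prod_univ_succ, Fin.insertNth_zero]
      simp only [Fin.zero_succAbove, Nat.cast_id, Function.comp_def, Fin.cons_zero, Fin.cons_succ,
        Equiv.coe_fn_mk]
      have h2 : Integrable (fun x : Fin n → ℝ => ∏ j, f (Fin.succ j) (x j))
          (Measure.pi fun _ => μ) := n_ih _ (fun i => hf _)
      exact Integrable.mul_prod (hf 0) h2

lemma my_integral_pi_prod {n : ℕ} (μ : Measure ℝ) [IsProbabilityMeasure μ]
    (f : Fin n → ℝ → ℝ) :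
    ∫ x : Fin n → ℝ, ∏ i, f i (x i) ∂(Measure.pi fun _ => μ) = ∏ i, ∫ x, f i x ∂μ := by
  induction n with
  | zero => simp
  | succ n n_ih =>
      calc
        _ = ∫ x : ℝ × (Fin n → ℝ), f 0 x.1 * ∏ i : Fin n, f (Fin.succ i) (x.2 i)
            ∂(μ.prod (Measure.pi fun _ => μ)) := by
          rw [← ((measurePreserving_piFinSuccAbove (fun _ : Fin (n + 1) => μ) 0).symm).integral_comp']
          simp_rw [MeasurableEquiv.piFinSuccAbove_symm_apply, Fin.insertNthEquiv,
            Fin.prod_univ_succ, Fin.insertNth_zero, Equiv.coe_fn_mk]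
          simp only [Fin.zero_succAbove, Nat.cast_id, Fin.cons_zero, Fin.cons_succ]
          rfl
        _ = (∫ x, f 0 x ∂μ) * ∏ i : Fin n, ∫ x, f (Fin.succ i) x ∂μ := by
          rw [← n_ih _, ← integral_prod_mul]
        _ = ∏ i, ∫ x, f i x ∂μ := by rw [Fin.prod_univ_succ]

lemma exp_inner_eq_prod {d : ℕ} (w x : EuclideanSpace ℝ (Fin d)) (u : ℝ) :
    Real.exp (u * ⟪w, x⟫) = ∏ i, Real.exp (u * w i * x i) := by
  rw [← Real.exp_sum]
  congr 1
  rw [PiLp.inner_apply]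
  simp only [RCLike.inner_apply, conj_trivial]
  rw [Finset.mul_sum]
  exact Finset.sum_congr rfl fun i _ => by ring

lemma integral_exp_inner {d : ℕ} (w : EuclideanSpace ℝ (Fin d)) (u : ℝ) :
    ∫ x, Real.exp (u * ⟪w, x⟫) ∂(stdGaussian d) = Real.exp (u ^ 2 * ⟪w, w⟫ / 2) := by
  simp_rw [exp_inner_eq_prod]
  rw [show ∫ x, (∏ i, Real.exp (u * w i * x i)) ∂(stdGaussian d)
      = ∏ i, ∫ y, Real.exp (u * w i * y) ∂(gaussianReal 0 1) from
    by rw [_root_.stdGaussian, (MeasurableEquiv.toLp 2 (Fin d → ℝ)).measurableEmbedding.integral_map]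
       exact my_integral_pi_prod (gaussianReal 0 1) (fun i y => Real.exp (u * w i * y))]
  simp_rw [_root_.integral_exp_mul_gaussianReal]
  rw [← Real.exp_sum]
  congr 1
  rw [PiLp.inner_apply]
  simp only [RCLike.inner_apply, conj_trivial]
  rw [Finset.mul_sum, Finset.sum_div]
  exact Finset.sum_congr rfl fun i _ => by ring

lemma integrable_exp_inner {d : ℕ} (w : EuclideanSpace ℝ (Fin d)) (u : ℝ) :
    Integrable (fun x => Real.exp (u * ⟪w, x⟫)) (stdGaussian d) := by
  have h := my_integrable_pi_prod (gaussianReal 0 1)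
      (fun i y => Real.exp (u * w i * y))
      (fun i => _root_.integrable_exp_mul_gaussianReal (u * w i))
  have h2 : Integrable (fun x : EuclideanSpace ℝ (Fin d) => ∏ i, Real.exp (u * w i * x i))
      (stdGaussian d) := by
    rw [_root_.stdGaussian, (MeasurableEquiv.toLp 2 (Fin d → ℝ)).measurableEmbedding.integrable_map_iff]
    exact h
  exact h2.congr (Filter.Eventually.of_forall fun x => (exp_inner_eq_prod w x u).symm)

lemma tail_ge {d : ℕ} (w : EuclideanSpace ℝ (Fin d)) {σ2 t : ℝ} (hσ : 0 < σ2)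
    (hw : ⟪w, w⟫ = σ2) (ht : 0 < t) :
    stdGaussian d {x | t ≤ ⟪w, x⟫} ≤ ENNReal.ofReal (Real.exp (-t ^ 2 / (2 * σ2))) := by
  have hu : 0 ≤ t / σ2 := le_of_lt (div_pos ht hσ)
  have h := measure_ge_le_exp_mul_mgf (μ := stdGaussian d) (X := fun x => ⟪w, x⟫) t hu
    (integrable_exp_inner w (t / σ2))
  have hmgf : mgf (fun x => ⟪w, x⟫) (stdGaussian d) (t / σ2)
      = Real.exp ((t / σ2) ^ 2 * σ2 / 2) := by
    rw [mgf, integral_exp_inner, hw]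
  rw [hmgf, ← Real.exp_add] at h
  have hexp : -(t / σ2) * t + (t / σ2) ^ 2 * σ2 / 2 = -t ^ 2 / (2 * σ2) := by
    field_simp
    ring
  rw [hexp] at h
  calc stdGaussian d {x | t ≤ ⟪w, x⟫}
      = ENNReal.ofReal (stdGaussian d {x | t ≤ ⟪w, x⟫}).toReal :=
        (ENNReal.ofReal_toReal (measure_ne_top _ _)).symm
    _ ≤ ENNReal.ofReal (Real.exp (-t ^ 2 / (2 * σ2))) := ENNReal.ofReal_le_ofReal h

lemma tail_abs {d : ℕ} (w : EuclideanSpace ℝ (Fin d)) {σ2 t : ℝ} (hσ : 0 < σ2)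
    (hw : ⟪w, w⟫ = σ2) (ht : 0 < t) :
    stdGaussian d {x | t ≤ |⟪w, x⟫|} ≤ ENNReal.ofReal (2 * Real.exp (-t ^ 2 / (2 * σ2))) := by
  have hsub : {x : EuclideanSpace ℝ (Fin d) | t ≤ |⟪w, x⟫|}
      ⊆ {x | t ≤ ⟪w, x⟫} ∪ {x | t ≤ ⟪-w, x⟫} := by
    intro x hx
    simp only [Set.mem_setOf_eq] at hx
    rcases le_abs.mp hx with h | h
    · exact Or.inl h
    · exact Or.inr (by simpa [inner_neg_left] using h)
  have hw' : ⟪-w, -w⟫ = σ2 := by rw [inner_neg_neg]; exact hw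
  calc stdGaussian d {x | t ≤ |⟪w, x⟫|}
      ≤ stdGaussian d ({x | t ≤ ⟪w, x⟫} ∪ {x | t ≤ ⟪-w, x⟫}) := measure_mono hsub
    _ ≤ stdGaussian d {x | t ≤ ⟪w, x⟫} + stdGaussian d {x | t ≤ ⟪-w, x⟫} := measure_union_le _ _
    _ ≤ ENNReal.ofReal (Real.exp (-t ^ 2 / (2 * σ2)))
        + ENNReal.ofReal (Real.exp (-t ^ 2 / (2 * σ2))) :=
        add_le_add (tail_ge w hσ hw ht) (tail_ge (-w) hσ hw' ht)
    _ = ENNReal.ofReal (2 * Real.exp (-t ^ 2 / (2 * σ2))) := by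
        rw [← ENNReal.ofReal_add (le_of_lt (Real.exp_pos _)) (le_of_lt (Real.exp_pos _))]
        ring_nf

theorem featureAveraging_clean_accuracy (d k : ℕ) (hd : 2 ≤ d) (hk : 1 ≤ k)
    (hlog : 2 * k * Real.log d < Real.sqrt d)
    (μ : Fin k → EuclideanSpace ℝ (Fin d))
    (hnorm : ∀ j, ‖μ j‖ = Real.sqrt d)
    (horth : ∀ i j, i ≠ j → ⟪μ i, μ j⟫ = 0)
    (s : Fin k → ℝ) (hs : ∀ j, s j = 1 ∨ s j = -1) :
    ENNReal.ofReal (1 - 2 * k * (d : ℝ) ^ (-(Real.log d) / 2)) ≤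
      (((k : ENNReal)⁻¹ • (Measure.count : Measure (Fin k))).prod (stdGaussian d))
        {p : Fin k × EuclideanSpace ℝ (Fin d) | sgn (fFA μ s (μ p.1 + p.2)) = s p.1} := by
  classical
  have hd0 : (0:ℝ) < d := Nat.cast_pos.mpr (by omega)
  have hd1 : (1:ℝ) < d := by exact_mod_cast (by omega : 1 < d)
  set L := Real.log d with hLdef
  have hL0 : 0 < L := Real.log_pos hd1
  have hk0 : (0:ℝ) < k := Nat.cast_pos.mpr hk
  -- key arithmetic : 4 k L^2 ≤ d
  have hsq : (2 * (k:ℝ) * L) ^ 2 < d := by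
    have h1 : 0 ≤ 2 * (k:ℝ) * L := by positivity
    have h2 : Real.sqrt d ^ 2 = d := Real.sq_sqrt hd0.le
    nlinarith [hlog]
  have hk1 : (1:ℝ) ≤ k := by exact_mod_cast hk
  have hkey : 4 * (k:ℝ) * L ^ 2 ≤ d := by nlinarith [hk1, sq_nonneg L, hL0, hk0]
  set P := univ.filter (fun j => s j = 1) with hPdef
  set N := univ.filter (fun j => s j = -1) with hNdef
  set wP := ∑ j ∈ P, μ j with hwP
  set wN := ∑ j ∈ N, μ j with hwN
  have hsum_inner : ∀ (A : Finset (Fin k)) (j : Fin k),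
      ⟪∑ i ∈ A, μ i, μ j⟫ = if j ∈ A then (d:ℝ) else 0 := by
    intro A j
    rw [sum_inner]
    rw [Finset.sum_congr rfl (fun i _ => show ⟪μ i, μ j⟫ = if i = j then (d:ℝ) else 0 by
      split
      · next h => rw [h, real_inner_self_eq_norm_sq, hnorm, Real.sq_sqrt hd0.le]
      · next h => exact horth i j h)]
    exact Finset.sum_ite_eq' A j (fun _ => (d:ℝ))
  have hww : ∀ A : Finset (Fin k), ⟪∑ i ∈ A, μ i, ∑ j ∈ A, μ j⟫ = (A.card : ℝ) * d := by
    intro A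
    rw [inner_sum]
    rw [Finset.sum_congr rfl (fun j hj => (hsum_inner A j).trans (if_pos hj))]
    rw [Finset.sum_const, nsmul_eq_mul]
  have hcard : P.card + N.card = k := by
    have hNP : N = univ.filter (fun j => ¬ s j = 1) := by
      apply Finset.filter_congr
      intro j _
      rcases hs j with h | h <;> simp [h] <;> norm_num
    rw [hPdef, hNP, Finset.card_filter_add_card_filter_not, card_univ, Fintype.card_fin]
  -- the good event
  set G : Set (EuclideanSpace ℝ (Fin d)) :=
    {x | |⟪wP, x⟫| < d/2 ∧ |⟪wN, x⟫| < d/2} with hGdef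
  -- the good event implies correct classification for every cluster
  have hGsub : (Set.univ ×ˢ G) ⊆
      {p : Fin k × EuclideanSpace ℝ (Fin d) | sgn (fFA μ s (μ p.1 + p.2)) = s p.1} := by
    rintro ⟨j, x⟩ ⟨-, hx⟩
    obtain ⟨h1, h2⟩ := hx
    have h1' := abs_lt.mp h1
    have h2' := abs_lt.mp h2
    have hfa : fFA μ s (μ j + x)
        = relu (⟪wP, μ j⟫ + ⟪wP, x⟫) - relu (⟪wN, μ j⟫ + ⟪wN, x⟫) := by
      rw [fFA, ← hPdef, ← hNdef, ← hwP, ← hwN, inner_add_right, inner_add_right]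
    rcases hs j with hsj | hsj
    · have hjP : j ∈ P := by rw [hPdef]; simp [hsj]
      have hjN : j ∉ N := by rw [hNdef]; simp [hsj]; norm_num
      have hPj : ⟪wP, μ j⟫ = (d:ℝ) := by rw [hwP, hsum_inner, if_pos hjP]
      have hNj : ⟪wN, μ j⟫ = (0:ℝ) := by rw [hwN, hsum_inner, if_neg hjN]
      have hfpos : 0 < fFA μ s (μ j + x) := by
        rw [hfa, hPj, hNj, zero_add]
        have ha : (d:ℝ)/2 < relu ((d:ℝ) + ⟪wP, x⟫) := by
          have := le_max_left ((d:ℝ) + ⟪wP, x⟫) 0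
          rw [relu]
          linarith [h1'.1]
        have hb : relu (⟪wN, x⟫) < d/2 := by
          rw [relu]
          exact max_lt (lt_of_le_of_lt (le_abs_self _) h2) (by linarith)
        linarith
      rw [Set.mem_setOf_eq, sgn, if_pos hfpos, hsj]
    · have hjN : j ∈ N := by rw [hNdef]; simp [hsj]
      have hjP : j ∉ P := by rw [hPdef]; simp [hsj]; norm_num
      have hPj : ⟪wP, μ j⟫ = (0:ℝ) := by rw [hwP, hsum_inner, if_neg hjP]
      have hNj : ⟪wN, μ j⟫ = (d:ℝ) := by rw [hwN, hsum_inner, if_pos hjN]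
      have hfneg : ¬ (0 < fFA μ s (μ j + x)) := by
        rw [hfa, hPj, hNj, zero_add]
        have ha : (d:ℝ)/2 < relu ((d:ℝ) + ⟪wN, x⟫) := by
          have := le_max_left ((d:ℝ) + ⟪wN, x⟫) 0
          rw [relu]
          linarith [h2'.1]
        have hb : relu (⟪wP, x⟫) < d/2 := by
          rw [relu]
          exact max_lt (lt_of_le_of_lt (le_abs_self _) h1) (by linarith)
        push_neg
        linarith
      rw [Set.mem_setOf_eq, sgn, if_neg hfneg, hsj]
  -- product measure of the cylinder set
  have hprodG : (((k : ENNReal)⁻¹ • (Measure.count : Measure (Fin k))).prod (stdGaussian d))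
      (Set.univ ×ˢ G) = stdGaussian d G := by
    rw [Measure.prod_prod, Measure.smul_apply, Measure.count_univ, ENat.card_eq_coe_fintype_card, Fintype.card_fin, ENat.toENNReal_coe,
      smul_eq_mul, ENNReal.inv_mul_cancel (by exact_mod_cast (by omega : k ≠ 0)) (ENNReal.natCast_ne_top k), one_mul]
  -- tail bounds
  have key : ∀ A : Finset (Fin k), A.Nonempty →
      stdGaussian d {x | (d:ℝ)/2 ≤ |⟪∑ j ∈ A, μ j, x⟫|}
        ≤ ENNReal.ofReal (2 * Real.exp (-(L^2)/2)) := by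
    intro A hA
    have hc1 : 1 ≤ A.card := Finset.card_pos.mpr hA
    have hck : A.card ≤ k := by simpa using Finset.card_le_univ A
    have hc1' : (1:ℝ) ≤ A.card := by exact_mod_cast hc1
    have hck' : (A.card : ℝ) ≤ k := by exact_mod_cast hck
    have hσ : (0:ℝ) < A.card * d := mul_pos (lt_of_lt_of_le one_pos hc1') hd0
    have h := tail_abs (∑ j ∈ A, μ j) hσ (hww A) (by linarith : (0:ℝ) < d/2)
    refine h.trans (ENNReal.ofReal_le_ofReal ?_)
    have hexp : -((d:ℝ)/2)^2 / (2 * (A.card * d)) ≤ -(L^2)/2 := by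
      rw [div_le_div_iff₀ (by linarith : (0:ℝ) < 2 * (A.card * d)) (by norm_num : (0:ℝ) < 2)]
      have expand : -((d:ℝ)/2)^2 * 2 = -(d * d / 2) := by ring
      rw [expand]
      have h2 : L^2 * (A.card : ℝ) * 2 ≤ (k:ℝ) * L^2 * 2 := by nlinarith [sq_nonneg L]
      nlinarith [hkey, sq_nonneg L, hd0]
    have := Real.exp_le_exp.mpr hexp
    linarith
  -- union bound
  set Ap : Set (EuclideanSpace ℝ (Fin d)) := {x | (d:ℝ)/2 ≤ |⟪wP, x⟫|} with hApdef
  set An : Set (EuclideanSpace ℝ (Fin d)) := {x | (d:ℝ)/2 ≤ |⟪wN, x⟫|} with hAndef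
  have hcover : (Set.univ : Set (EuclideanSpace ℝ (Fin d))) ⊆ G ∪ (Ap ∪ An) := by
    intro x _
    by_cases h1 : |⟪wP, x⟫| < d/2
    · by_cases h2 : |⟪wN, x⟫| < d/2
      · exact Or.inl ⟨h1, h2⟩
      · exact Or.inr (Or.inr (le_of_not_gt h2))
    · exact Or.inr (Or.inl (le_of_not_gt h1))
  have hunion : (1 : ENNReal) ≤ stdGaussian d G + (stdGaussian d Ap + stdGaussian d An) := by
    calc (1 : ENNReal) = stdGaussian d Set.univ := measure_univ.symm
      _ ≤ stdGaussian d (G ∪ (Ap ∪ An)) := measure_mono hcover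
      _ ≤ stdGaussian d G + stdGaussian d (Ap ∪ An) := measure_union_le _ _
      _ ≤ stdGaussian d G + (stdGaussian d Ap + stdGaussian d An) :=
          add_le_add_right (measure_union_le _ _) _
  -- bound the two tails together
  have hempty : ∀ A : Finset (Fin k), A = ∅ →
      stdGaussian d {x | (d:ℝ)/2 ≤ |⟪∑ j ∈ A, μ j, x⟫|} = 0 := by
    intro A hA
    have : {x : EuclideanSpace ℝ (Fin d) | (d:ℝ)/2 ≤ |⟪∑ j ∈ A, μ j, x⟫|} = ∅ := by
      ext x
      simp only [Set.mem_setOf_eq, Set.mem_empty_iff_false, iff_false, not_le, hA,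
        Finset.sum_empty, inner_zero_left, abs_zero]
      linarith
    rw [this, measure_empty]
  have hEpos : (0:ℝ) ≤ Real.exp (-(L^2)/2) := (Real.exp_pos _).le
  have htails : stdGaussian d Ap + stdGaussian d An
      ≤ ENNReal.ofReal (2 * k * Real.exp (-(L^2)/2)) := by
    rcases Finset.eq_empty_or_nonempty P with hPe | hPne
    · have hNne : N.Nonempty := by
        rw [← Finset.card_pos]
        have := Finset.card_eq_zero.mpr hPe
        omega
      rw [hApdef, hwP, hempty P hPe, zero_add]
      refine (key N hNne).trans (ENNReal.ofReal_le_ofReal ?_)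
      nlinarith [hEpos, hk0]
    rcases Finset.eq_empty_or_nonempty N with hNe | hNne
    · rw [hAndef, hwN, hempty N hNe, add_zero]
      refine (key P hPne).trans (ENNReal.ofReal_le_ofReal ?_)
      nlinarith [hEpos, hk0]
    · have hk2 : 2 ≤ k := by
        have := Finset.card_pos.mpr hPne
        have := Finset.card_pos.mpr hNne
        omega
      have hk2' : (2:ℝ) ≤ k := by exact_mod_cast hk2
      calc stdGaussian d Ap + stdGaussian d An
          ≤ ENNReal.ofReal (2 * Real.exp (-(L^2)/2))
            + ENNReal.ofReal (2 * Real.exp (-(L^2)/2)) := add_le_add (key P hPne) (key N hNne)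
        _ = ENNReal.ofReal (4 * Real.exp (-(L^2)/2)) := by
            rw [← ENNReal.ofReal_add (by positivity) (by positivity)]
            ring_nf
        _ ≤ ENNReal.ofReal (2 * k * Real.exp (-(L^2)/2)) := by
            apply ENNReal.ofReal_le_ofReal
            nlinarith [hEpos]
  -- identify the rpow with the exponential
  have hrpow : (d : ℝ) ^ (-(Real.log d) / 2) = Real.exp (-(L^2)/2) := by
    rw [Real.rpow_def_of_pos hd0, ← hLdef]
    congr 1
    ring
  rw [hrpow]
  have hG : ENNReal.ofReal (1 - 2 * k * Real.exp (-(L^2)/2)) ≤ stdGaussian d G := by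
    rw [ENNReal.ofReal_sub _ (by positivity), ENNReal.ofReal_one]
    rw [tsub_le_iff_right]
    calc (1:ENNReal) ≤ stdGaussian d G + (stdGaussian d Ap + stdGaussian d An) := hunion
      _ ≤ stdGaussian d G + ENNReal.ofReal (2 * k * Real.exp (-(L^2)/2)) :=
          add_le_add_right htails _
  calc ENNReal.ofReal (1 - 2 * k * Real.exp (-(L^2)/2))
      ≤ stdGaussian d G := hG
    _ = (((k : ENNReal)⁻¹ • (Measure.count : Measure (Fin k))).prod (stdGaussian d))
        (Set.univ ×ˢ G) := hprodG.symm
    _ ≤ _ := measure_mono hGsub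
end

section
/- (Small cross-entropy loss of the non-robust multi-class network) Let d, k ≥ 1 with d ≥ 2 and 2(k+1) · ln d < √d, and let μ : Fin k → ℝ^d be orthogonal equinorm cluster features with binary cluster labels s. Consider the multi-class network F̃ with components f_j(x) = ReLU(⟨μ_j + Σ_{l : s l = s j} μ_l, x⟩) and softmax probabilities p_j(x) = exp(f_j(x)) / Σ_{l ∈ Fin k} exp(f_l(x)). Then with probability at least 1 − 2k · d^{−(ln d)/2} over (J, ξ) ~ (uniform on Fin k) ⊗ γ_d, the per-point cross-entropy loss at x = μ_J + ξ satisfies −log p_J(x) ≤ k · exp(−(d − 2(k+1) · √d · ln d)). -/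
open MeasureTheory ProbabilityTheory Real Finset
open scoped RealInnerProductSpace

/-- The `j`-th component of the non-robust multi-class network. -/
noncomputable def fMulti {d k : ℕ} (μ : Fin k → EuclideanSpace ℝ (Fin d)) (s : Fin k → ℝ)
    (j : Fin k) (x : EuclideanSpace ℝ (Fin d)) : ℝ :=
  relu ⟪μ j + ∑ l ∈ univ.filter (fun l => s l = s j), μ l, x⟫

/-- The softmax probability of class `j` under the non-robust multi-class network. -/
noncomputable def pMulti {d k : ℕ} (μ : Fin k → EuclideanSpace ℝ (Fin d)) (s : Fin k → ℝ)
    (j : Fin k) (x : EuclideanSpace ℝ (Fin d)) : ℝ :=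
  Real.exp (fMulti μ s j x) / ∑ l : Fin k, Real.exp (fMulti μ s l x)

open scoped ENNReal

instance stdGaussian_isProbabilityMeasure (d : ℕ) : IsProbabilityMeasure (stdGaussian d) :=
  Measure.isProbabilityMeasure_map (MeasurableEquiv.toLp 2 (Fin d → ℝ)).measurable.aemeasurable

lemma integral_exp_quadratic_real (a : ℝ) :
    ∫ x : ℝ, Real.exp (-(1/2) * x ^ 2 + a * x) = Real.sqrt (2 * π) * Real.exp (a ^ 2 / 2) := by
  have hb : ((-(1/2) : ℂ)).re < 0 := by norm_num
  have h := integral_cexp_quadratic hb (a : ℂ) 0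
  have h1 : ∀ x : ℝ, Complex.exp ((-(1/2) : ℂ) * (x:ℂ) ^ 2 + (a:ℂ) * x + 0) =
      ((Real.exp (-(1/2) * x ^ 2 + a * x) : ℝ) : ℂ) := by
    intro x
    rw [show ((-(1/2) : ℂ) * (x:ℂ) ^ 2 + (a:ℂ) * x + 0 : ℂ)
        = ((-(1/2) * x ^ 2 + a * x : ℝ) : ℂ) by push_cast; ring, Complex.ofReal_exp]
  rw [show (fun x : ℝ => Complex.exp ((-(1/2) : ℂ) * (x:ℂ) ^ 2 + (a:ℂ) * x + 0))
      = fun x : ℝ => ((Real.exp (-(1/2) * x ^ 2 + a * x) : ℝ) : ℂ) from funext h1] at h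
  have h2 : ((π : ℂ) / -(-(1/2) : ℂ)) ^ (1/2 : ℂ) * Complex.exp (0 - (a:ℂ)^2 / (4 * (-(1/2) : ℂ)))
      = ((Real.sqrt (2*π) * Real.exp (a^2/2) : ℝ) : ℂ) := by
    have e1 : ((π : ℂ) / -(-(1/2) : ℂ)) = ((2*π : ℝ) : ℂ) := by push_cast; ring
    have e2 : ((0:ℂ) - (a:ℂ)^2 / (4 * (-(1/2) : ℂ))) = ((a^2/2 : ℝ) : ℂ) := by push_cast; ring
    rw [e1, e2, ← Complex.ofReal_exp, show (1/2 : ℂ) = ((1/2:ℝ) : ℂ) by norm_num,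
      ← Complex.ofReal_cpow (by positivity), ← Complex.ofReal_mul, Real.sqrt_eq_rpow]
  have h3 : ((∫ x : ℝ, Real.exp (-(1/2) * x ^ 2 + a * x) : ℝ) : ℂ)
      = ((Real.sqrt (2*π) * Real.exp (a^2/2) : ℝ) : ℂ) := by
    exact integral_ofReal.symm.trans (h.trans h2)
  exact_mod_cast h3

lemma integrable_exp_quadratic_real (a : ℝ) :
    Integrable (fun x : ℝ => Real.exp (-(1/2) * x ^ 2 + a * x)) := by
  have h := (integrable_cexp_quadratic (b := (1/2 : ℂ)) (by norm_num) (a:ℂ) 0).re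
  apply h.congr (Filter.Eventually.of_forall fun x => ?_)
  have : ((-(1/2:ℂ)) * (x:ℂ)^2 + (a:ℂ) * x + 0) = ((-(1/2) * x^2 + a*x : ℝ) : ℂ) := by
    push_cast; ring
  simp only [RCLike.re_to_complex, this, Complex.exp_ofReal_re]

lemma lintegral_exp_gaussianReal (a : ℝ) :
    ∫⁻ y, ENNReal.ofReal (Real.exp (a * y)) ∂(gaussianReal 0 1) =
      ENNReal.ofReal (Real.exp (a ^ 2 / 2)) := by
  rw [gaussianReal_of_var_ne_zero 0 one_ne_zero,
    lintegral_withDensity_eq_lintegral_mul _ (measurable_gaussianPDF 0 1)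
      (by fun_prop)]
  have hsq : (0:ℝ) < Real.sqrt (2 * π) := Real.sqrt_pos.mpr (by positivity)
  have hg : (fun y => (gaussianPDF 0 1 * fun y => ENNReal.ofReal (Real.exp (a * y))) y)
      = fun y => ENNReal.ofReal ((Real.sqrt (2*π))⁻¹ * Real.exp (-(1/2)*y^2 + a*y)) := by
    funext y
    simp only [Pi.mul_apply, gaussianPDF, ← ENNReal.ofReal_mul (gaussianPDFReal_nonneg 0 1 y)]
    congr 1
    simp only [gaussianPDFReal, NNReal.coe_one, mul_one, sub_zero]
    rw [mul_assoc, ← Real.exp_add]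
    ring_nf
  rw [hg, ← ofReal_integral_eq_lintegral_ofReal
      ((integrable_exp_quadratic_real a).const_mul _)
      (Filter.Eventually.of_forall fun y => by positivity)]
  congr 1
  rw [MeasureTheory.integral_const_mul, integral_exp_quadratic_real, ← mul_assoc,
    inv_mul_cancel₀ (ne_of_gt hsq), one_mul]

lemma lintegral_pi_prod {n : ℕ} (m : Measure ℝ) [SigmaFinite m]
    (f : Fin n → ℝ → ℝ≥0∞) (hf : ∀ i, Measurable (f i)) :
    ∫⁻ x : Fin n → ℝ, ∏ i, f i (x i) ∂(Measure.pi fun _ => m) = ∏ i, ∫⁻ y, f i y ∂m := by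
  induction n with
  | zero => simp [Measure.pi_of_empty]
  | succ n ih =>
    have hmp := measurePreserving_piFinSuccAbove (fun _ : Fin (n+1) => m) 0
    have hG : Measurable (fun z : Fin n → ℝ => ∏ i : Fin n, f i.succ (z i)) :=
      Finset.measurable_prod _ fun i _ => (hf i.succ).comp (measurable_pi_apply i)
    have hF : Measurable (fun p : ℝ × (Fin n → ℝ) => f 0 p.1 * ∏ i : Fin n, f i.succ (p.2 i)) :=
      ((hf 0).comp measurable_fst).mul (hG.comp measurable_snd)
    calc ∫⁻ x : Fin (n+1) → ℝ, ∏ i, f i (x i) ∂(Measure.pi fun _ => m)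
        = ∫⁻ x : Fin (n+1) → ℝ, (fun p : ℝ × (Fin n → ℝ) => f 0 p.1 * ∏ i : Fin n, f i.succ (p.2 i))
            (MeasurableEquiv.piFinSuccAbove (fun _ => ℝ) 0 x) ∂(Measure.pi fun _ => m) := by
          congr 1
          funext x
          simp only [MeasurableEquiv.piFinSuccAbove, MeasurableEquiv.coe_mk]
          rw [Fin.prod_univ_succ]
          rfl
      _ = ∫⁻ p : ℝ × (Fin n → ℝ), f 0 p.1 * ∏ i : Fin n, f i.succ (p.2 i)
            ∂(m.prod (Measure.pi fun _ => m)) := hmp.lintegral_comp hF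
      _ = (∫⁻ y, f 0 y ∂m) * ∏ i : Fin n, ∫⁻ y, f i.succ y ∂m := by
          rw [lintegral_prod_mul (hf 0).aemeasurable hG.aemeasurable, ih _ fun i => hf i.succ]
      _ = ∏ i, ∫⁻ y, f i y ∂m := (Fin.prod_univ_succ fun i => ∫⁻ y, f i y ∂m).symm

lemma lintegral_stdGaussian_prod {d : ℕ}
    (f : Fin d → ℝ → ℝ≥0∞) (hf : ∀ i, Measurable (f i)) :
    ∫⁻ x : EuclideanSpace ℝ (Fin d), ∏ i, f i (x i) ∂(stdGaussian d)
      = ∏ i, ∫⁻ y, f i y ∂(gaussianReal 0 1) := by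
  rw [_root_.stdGaussian, lintegral_map_equiv]
  exact lintegral_pi_prod (gaussianReal 0 1) f hf

lemma stdGaussian_chernoff {d : ℕ} (v : EuclideanSpace ℝ (Fin d)) (t B : ℝ) (ht : 0 < t) :
    stdGaussian d {ξ | B ≤ ⟪v, ξ⟫} ≤ ENNReal.ofReal (Real.exp (t ^ 2 * ‖v‖ ^ 2 / 2 - t * B)) := by
  have hmeas : Measurable fun ξ : EuclideanSpace ℝ (Fin d) => ⟪v, ξ⟫ :=
    (continuous_const.inner continuous_id).measurable
  have hnorm : ‖v‖ ^ 2 = ∑ i, v i ^ 2 := by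
    rw [EuclideanSpace.norm_eq, Real.sq_sqrt (by positivity)]
    simp [sq_abs]
  have hint : ∫⁻ ξ, ENNReal.ofReal (Real.exp (t * ⟪v, ξ⟫)) ∂stdGaussian d
      = ENNReal.ofReal (Real.exp (t ^ 2 * ‖v‖ ^ 2 / 2)) := by
    have h1 : ∀ ξ : EuclideanSpace ℝ (Fin d), ENNReal.ofReal (Real.exp (t * ⟪v, ξ⟫))
        = ∏ i, ENNReal.ofReal (Real.exp (t * v i * ξ i)) := by
      intro ξ
      rw [← ENNReal.ofReal_prod_of_nonneg (fun i _ => (Real.exp_pos _).le), ← Real.exp_sum]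
      congr 2
      rw [PiLp.inner_apply, Finset.mul_sum]
      congr 1; funext i; simp [RCLike.inner_apply]; ring
    simp_rw [h1]
    rw [lintegral_stdGaussian_prod (fun i y => ENNReal.ofReal (Real.exp (t * v i * y)))
      (fun i => by fun_prop)]
    have h2 : ∀ i : Fin d, ∫⁻ y, ENNReal.ofReal (Real.exp (t * v i * y)) ∂(gaussianReal 0 1)
        = ENNReal.ofReal (Real.exp ((t * v i) ^ 2 / 2)) := fun i => lintegral_exp_gaussianReal _
    simp_rw [h2]
    rw [← ENNReal.ofReal_prod_of_nonneg (fun i _ => (Real.exp_pos _).le), ← Real.exp_sum]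
    congr 2
    rw [hnorm, Finset.mul_sum]
    · rw [← Finset.sum_div]
      congr 1
      congr 1; funext i; ring
  have hε : (ENNReal.ofReal (Real.exp (t * B))) ≠ 0 := (ENNReal.ofReal_pos.mpr (Real.exp_pos _)).ne'
  have hkey := mul_meas_ge_le_lintegral₀ (μ := stdGaussian d)
    (f := fun ξ => ENNReal.ofReal (Real.exp (t * ⟪v, ξ⟫)))
    ((Real.measurable_exp.comp (hmeas.const_mul t)).ennreal_ofReal.aemeasurable)
    (ENNReal.ofReal (Real.exp (t * B)))
  have hsub : {ξ : EuclideanSpace ℝ (Fin d) | B ≤ ⟪v, ξ⟫} ⊆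
      {ξ | ENNReal.ofReal (Real.exp (t * B)) ≤ ENNReal.ofReal (Real.exp (t * ⟪v, ξ⟫))} :=
    fun ξ h => ENNReal.ofReal_le_ofReal (Real.exp_le_exp.mpr
      (mul_le_mul_of_nonneg_left h ht.le))
  calc stdGaussian d {ξ | B ≤ ⟪v, ξ⟫} ≤
      stdGaussian d {ξ | ENNReal.ofReal (Real.exp (t * B)) ≤
        ENNReal.ofReal (Real.exp (t * ⟪v, ξ⟫))} := measure_mono hsub
    _ ≤ (∫⁻ ξ, ENNReal.ofReal (Real.exp (t * ⟪v, ξ⟫)) ∂stdGaussian d) /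
        ENNReal.ofReal (Real.exp (t * B)) := by
      rw [ENNReal.le_div_iff_mul_le (Or.inl hε) (Or.inl ENNReal.ofReal_ne_top)]
      rw [mul_comm]; exact hkey
    _ = ENNReal.ofReal (Real.exp (t ^ 2 * ‖v‖ ^ 2 / 2 - t * B)) := by
      rw [hint, ← ENNReal.ofReal_div_of_pos (Real.exp_pos _), ← Real.exp_sub]

lemma det_bound (d k : ℕ) (hd : 2 ≤ d) (hk : 1 ≤ k)
    (hlog : 2 * (k + 1) * Real.log d < Real.sqrt d)
    (μ : Fin k → EuclideanSpace ℝ (Fin d))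
    (hnorm : ∀ j, ‖μ j‖ = Real.sqrt d)
    (horth : ∀ i j, i ≠ j → ⟪μ i, μ j⟫ = 0)
    (s : Fin k → ℝ)
    (J : Fin k) (ξ : EuclideanSpace ℝ (Fin d))
    (hξ : ∀ l, |⟪μ l, ξ⟫| ≤ Real.sqrt d * Real.log d) :
    -Real.log (pMulti μ s J (μ J + ξ)) ≤
      k * Real.exp (-((d : ℝ) - 2 * (k + 1) * Real.sqrt d * Real.log d)) := by
  have hd0 : (0:ℝ) < d := by positivity
  have hd1 : (1:ℝ) < d := by exact_mod_cast hd
  have hlogd : 0 ≤ Real.log d := Real.log_nonneg hd1.le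
  set B : ℝ := Real.sqrt d * Real.log d with hBdef
  have hB0 : 0 ≤ B := mul_nonneg (Real.sqrt_nonneg _) hlogd
  set ε : ℝ := ((k:ℝ) + 1) * B with hεdef
  have hε0 : 0 ≤ ε := mul_nonneg (by positivity) hB0
  have h2ε : 2 * ε < d := by
    have h := mul_lt_mul_of_pos_right hlog (Real.sqrt_pos.mpr hd0)
    rw [Real.mul_self_sqrt hd0.le] at h
    calc 2 * ε = 2 * ((k:ℝ) + 1) * Real.log d * Real.sqrt d := by rw [hεdef, hBdef]; ring
      _ < d := h
  -- inner products with μ J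
  have hinner : ∀ l, ⟪μ l, μ J⟫ = if l = J then (d:ℝ) else 0 := by
    intro l
    by_cases h : l = J
    · subst h
      rw [if_pos rfl, real_inner_self_eq_norm_sq, hnorm, Real.sq_sqrt hd0.le]
    · rw [if_neg h]; exact horth l J h
  -- value of the pre-activation
  have hval : ∀ j : Fin k, ⟪μ j + ∑ l ∈ univ.filter (fun l => s l = s j), μ l, μ J + ξ⟫ =
      ((if j = J then (d:ℝ) else 0) + (if s J = s j then (d:ℝ) else 0)) +
        (⟪μ j, ξ⟫ + ∑ l ∈ univ.filter (fun l => s l = s j), ⟪μ l, ξ⟫) := by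
    intro j
    rw [inner_add_left, sum_inner, inner_add_right]
    have h1 : ∀ l, ⟪μ l, μ J + ξ⟫ = ⟪μ l, μ J⟫ + ⟪μ l, ξ⟫ := fun l => inner_add_right _ _ _
    simp_rw [h1, Finset.sum_add_distrib, hinner, Finset.sum_ite_eq' _ J (fun _ => (d:ℝ))]
    simp only [Finset.mem_filter, Finset.mem_univ, true_and]
    ring
  -- noise bound
  have hN : ∀ j : Fin k, |⟪μ j, ξ⟫ + ∑ l ∈ univ.filter (fun l => s l = s j), ⟪μ l, ξ⟫| ≤ ε := by
    intro j
    calc |⟪μ j, ξ⟫ + ∑ l ∈ univ.filter (fun l => s l = s j), ⟪μ l, ξ⟫|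
        ≤ |⟪μ j, ξ⟫| + |∑ l ∈ univ.filter (fun l => s l = s j), ⟪μ l, ξ⟫| := abs_add_le _ _
      _ ≤ B + ∑ l ∈ univ.filter (fun l => s l = s j), |⟪μ l, ξ⟫| :=
          add_le_add (hξ j) (Finset.abs_sum_le_sum_abs _ _)
      _ ≤ B + (univ.filter (fun l => s l = s j)).card • B :=
          add_le_add_right (Finset.sum_le_card_nsmul _ _ _ (fun l _ => hξ l)) _
      _ ≤ B + (k:ℝ) * B := by
          rw [nsmul_eq_mul]
          gcongr
          exact_mod_cast (Finset.card_le_univ _).trans (by simp)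
      _ = ε := by rw [hεdef]; ring
  -- lower bound on f J
  have hfJ : 2 * (d:ℝ) - ε ≤ fMulti μ s J (μ J + ξ) := by
    have h := hval J
    rw [if_pos rfl, if_pos rfl] at h
    have h2 : 2 * (d:ℝ) - ε ≤ ⟪μ J + ∑ l ∈ univ.filter (fun l => s l = s J), μ l, μ J + ξ⟫ := by
      rw [h]
      have := (abs_le.mp (hN J)).1
      linarith
    exact h2.trans (le_max_left _ _)
  -- upper bound on f j for j ≠ J
  have hfj : ∀ j : Fin k, j ≠ J → fMulti μ s j (μ J + ξ) ≤ (d:ℝ) + ε := by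
    intro j hj
    have h := hval j
    rw [if_neg hj] at h
    have h2 : ⟪μ j + ∑ l ∈ univ.filter (fun l => s l = s j), μ l, μ J + ξ⟫ ≤ (d:ℝ) + ε := by
      rw [h]
      have := (abs_le.mp (hN j)).2
      have hle : (if s J = s j then (d:ℝ) else 0) ≤ d := by split <;> simp [hd0.le]
      linarith
    exact max_le h2 (by positivity)
  -- gap
  have hgap : ∀ j : Fin k, j ≠ J →
      fMulti μ s j (μ J + ξ) - fMulti μ s J (μ J + ξ) ≤ -((d:ℝ) - 2 * ε) := by
    intro j hj
    have := hfj j hj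
    linarith [hfJ]
  -- cross-entropy computation
  set f : Fin k → ℝ := fun j => fMulti μ s j (μ J + ξ) with hfdef
  set T : ℝ := ∑ l : Fin k, Real.exp (f l) with hTdef
  have hTpos : 0 < T := Finset.sum_pos (fun l _ => Real.exp_pos _) ⟨J, Finset.mem_univ J⟩
  set S : ℝ := ∑ l ∈ univ.erase J, Real.exp (f l - f J) with hSdef
  have hS0 : 0 ≤ S := Finset.sum_nonneg fun l _ => (Real.exp_pos _).le
  have hratio : T / Real.exp (f J) = 1 + S := by
    rw [hTdef, Finset.sum_div, hSdef]
    have : ∀ l : Fin k, Real.exp (f l) / Real.exp (f J) = Real.exp (f l - f J) := fun l =>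
      (Real.exp_sub _ _).symm
    simp_rw [this]
    rw [← Finset.add_sum_erase _ _ (Finset.mem_univ J), sub_self, Real.exp_zero]
  have hlogp : -Real.log (pMulti μ s J (μ J + ξ)) = Real.log (1 + S) := by
    have : pMulti μ s J (μ J + ξ) = Real.exp (f J) / T := rfl
    rw [this, Real.log_div (Real.exp_ne_zero _) hTpos.ne', Real.log_exp, neg_sub,
      ← hratio, Real.log_div hTpos.ne' (Real.exp_ne_zero _), Real.log_exp]
  have hSbound : S ≤ (k:ℝ) * Real.exp (-((d:ℝ) - 2 * ε)) := by
    calc S ≤ ∑ l ∈ univ.erase J, Real.exp (-((d:ℝ) - 2 * ε)) := by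
          apply Finset.sum_le_sum
          intro l hl
          exact Real.exp_le_exp.mpr (hgap l (Finset.ne_of_mem_erase hl))
      _ = (univ.erase J).card * Real.exp (-((d:ℝ) - 2 * ε)) := by
          rw [Finset.sum_const, nsmul_eq_mul]
      _ ≤ (k:ℝ) * Real.exp (-((d:ℝ) - 2 * ε)) := by
          gcongr
          exact_mod_cast (Finset.card_le_univ _).trans (by simp)
  rw [hlogp]
  calc Real.log (1 + S) ≤ (1 + S) - 1 := Real.log_le_sub_one_of_pos (by linarith)
    _ = S := by ring
    _ ≤ (k:ℝ) * Real.exp (-((d:ℝ) - 2 * ε)) := hSbound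
    _ = k * Real.exp (-((d:ℝ) - 2 * ((k:ℝ) + 1) * Real.sqrt d * Real.log d)) := by
      rw [hεdef, hBdef]; ring_nf
theorem multiclass_small_cross_entropy (d k : ℕ) (hd : 2 ≤ d) (hk : 1 ≤ k)
    (hlog : 2 * (k + 1) * Real.log d < Real.sqrt d)
    (μ : Fin k → EuclideanSpace ℝ (Fin d))
    (hnorm : ∀ j, ‖μ j‖ = Real.sqrt d)
    (horth : ∀ i j, i ≠ j → ⟪μ i, μ j⟫ = 0)
    (s : Fin k → ℝ) (hs : ∀ j, s j = 1 ∨ s j = -1) :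
    ENNReal.ofReal (1 - 2 * k * (d : ℝ) ^ (-(Real.log d) / 2)) ≤
      (((k : ENNReal)⁻¹ • (Measure.count : Measure (Fin k))).prod (stdGaussian d))
        {p : Fin k × EuclideanSpace ℝ (Fin d) |
          -Real.log (pMulti μ s p.1 (μ p.1 + p.2)) ≤
            k * Real.exp (-((d : ℝ) - 2 * (k + 1) * Real.sqrt d * Real.log d))} := by
  classical
  have hd0 : (0:ℝ) < d := by positivity
  have hd1 : (1:ℝ) < d := by exact_mod_cast hd
  have hlogpos : 0 < Real.log d := Real.log_pos hd1
  have hsqrtpos : 0 < Real.sqrt d := Real.sqrt_pos.mpr hd0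
  set B : ℝ := Real.sqrt d * Real.log d with hBdef
  set r : ℝ := 2 * k * (d:ℝ) ^ (-(Real.log d) / 2) with hrdef
  have hr0 : 0 ≤ r := by positivity
  set E : Set (EuclideanSpace ℝ (Fin d)) := {ξ | ∀ l, |⟪μ l, ξ⟫| ≤ B} with hEdef
  have hEmeas : MeasurableSet E := by
    have hEi : E = ⋂ l, {ξ : EuclideanSpace ℝ (Fin d) | |⟪μ l, ξ⟫| ≤ B} := by
      ext ξ; simp [hEdef, Set.mem_iInter]
    rw [hEi]
    exact MeasurableSet.iInter fun l =>
      measurableSet_le ((continuous_const.inner continuous_id).abs.measurable) measurable_const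
  have hq : ∀ w : EuclideanSpace ℝ (Fin d), ‖w‖ = Real.sqrt d →
      stdGaussian d {ξ | B ≤ ⟪w, ξ⟫} ≤ ENNReal.ofReal ((d:ℝ) ^ (-(Real.log d) / 2)) := by
    intro w hw
    have ht : 0 < Real.log d / Real.sqrt d := by positivity
    have h := stdGaussian_chernoff w (Real.log d / Real.sqrt d) B ht
    have heq : (Real.log d / Real.sqrt d) ^ 2 * ‖w‖ ^ 2 / 2 - (Real.log d / Real.sqrt d) * B
        = -(Real.log d) ^ 2 / 2 := by
      rw [hw, hBdef]
      field_simp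
      ring
    rw [heq] at h
    have heq2 : (d:ℝ) ^ (-(Real.log d) / 2) = Real.exp (-(Real.log d) ^ 2 / 2) := by
      rw [Real.rpow_def_of_pos hd0]
      congr 1
      ring
    rw [heq2]
    exact h
  have hEc : stdGaussian d Eᶜ ≤ ENNReal.ofReal r := by
    have hsub : Eᶜ ⊆ ⋃ l, ({ξ : EuclideanSpace ℝ (Fin d) | B ≤ ⟪μ l, ξ⟫} ∪
        {ξ : EuclideanSpace ℝ (Fin d) | B ≤ ⟪-(μ l), ξ⟫}) := by
      intro ξ hξ
      simp only [hEdef, Set.mem_compl_iff, Set.mem_setOf_eq, not_forall, not_le] at hξ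
      obtain ⟨l, hl⟩ := hξ
      refine Set.mem_iUnion.mpr ⟨l, ?_⟩
      rcases lt_abs.mp hl with h | h
      · exact Or.inl h.le
      · refine Or.inr ?_
        rw [Set.mem_setOf_eq, inner_neg_left]
        exact h.le
    calc stdGaussian d Eᶜ
        ≤ ∑ l : Fin k, stdGaussian d ({ξ : EuclideanSpace ℝ (Fin d) | B ≤ ⟪μ l, ξ⟫} ∪
            {ξ : EuclideanSpace ℝ (Fin d) | B ≤ ⟪-(μ l), ξ⟫}) :=
          (measure_mono hsub).trans (measure_iUnion_fintype_le _ _)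
      _ ≤ ∑ _l : Fin k, (ENNReal.ofReal ((d:ℝ) ^ (-(Real.log d) / 2)) +
            ENNReal.ofReal ((d:ℝ) ^ (-(Real.log d) / 2))) := by
          apply Finset.sum_le_sum
          intro l _
          exact (measure_union_le _ _).trans
            (add_le_add (hq _ (hnorm l)) (hq _ (by rw [norm_neg]; exact hnorm l)))
      _ = ENNReal.ofReal r := by
          rw [Finset.sum_const, card_univ, Fintype.card_fin, nsmul_eq_mul,
            ← ENNReal.ofReal_add (by positivity) (by positivity),
            ← ENNReal.ofReal_natCast k, ← ENNReal.ofReal_mul (by positivity)]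
          congr 1
          rw [hrdef]; ring
  have hE : ENNReal.ofReal (1 - r) ≤ stdGaussian d E := by
    have h2 : stdGaussian d E + stdGaussian d Eᶜ = 1 := by
      rw [measure_add_measure_compl hEmeas, measure_univ]
    calc ENNReal.ofReal (1 - r) = 1 - ENNReal.ofReal r := by
          rw [ENNReal.ofReal_sub _ hr0, ENNReal.ofReal_one]
      _ ≤ 1 - stdGaussian d Eᶜ := tsub_le_tsub_left hEc 1
      _ ≤ stdGaussian d E := tsub_le_iff_right.mpr h2.ge
  have hsub2 : (Set.univ : Set (Fin k)) ×ˢ E ⊆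
      {p : Fin k × EuclideanSpace ℝ (Fin d) |
        -Real.log (pMulti μ s p.1 (μ p.1 + p.2)) ≤
          k * Real.exp (-((d : ℝ) - 2 * (k + 1) * Real.sqrt d * Real.log d))} := by
    rintro ⟨J, ξ⟩ ⟨-, hξ⟩
    exact det_bound d k hd hk hlog μ hnorm horth s J ξ hξ
  have hprod : (((k : ENNReal)⁻¹ • (Measure.count : Measure (Fin k))).prod (stdGaussian d))
      ((Set.univ : Set (Fin k)) ×ˢ E) = stdGaussian d E := by
    rw [Measure.prod_prod, Measure.smul_apply, Measure.count_univ, ENat.card_eq_coe_fintype_card, Fintype.card_fin, ENat.toENNReal_coe,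
      smul_eq_mul, ENNReal.inv_mul_cancel (by
        exact_mod_cast Nat.one_le_iff_ne_zero.mp hk) (ENNReal.natCast_ne_top k), one_mul]
  calc ENNReal.ofReal (1 - r) ≤ stdGaussian d E := hE
    _ = _ := hprod.symm
    _ ≤ _ := measure_mono hsub2
end

section
/- (A multi-class network in the feature-decoupling regime yields a robust binary classifier) Let d, k, h ≥ 1 with d ≥ 2 and 10 · ln d ≤ √d, and let μ : Fin k → ℝ^d be orthogonal equinorm cluster features with binary cluster labels s. Let the k-class network have weights w : Fin k × Fin h → ℝ^d, components f_j(x) = (1/h) Σ_{r∈Fin h} ReLU(⟨w_{j,r}, x⟩), softmax probabilities p_j(x) = exp(f_j(x)) / Σ_{l∈Fin k} exp(f_l(x)), and binary readout F^binary(x) = Σ_{j∈J₊} p_j(x) − Σ_{j∈J₋} p_j(x). Suppose there are reals ε ≥ 0 and λ ≥ 2 · ln k + 10ε + 2 such that ‖w_{j,r} − (λ/d) · μ_j‖ ≤ ε/√d for every j ∈ Fin k and r ∈ Fin h. Then the probability over (J, ξ) ~ (uniform on Fin k) ⊗ γ_d that sgn(F^binary(μ_J + ξ + ρ)) = s J holds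 for every perturbation ρ with ‖ρ‖ ≤ √d / 10 is at least 1 − 2k · d^{−(ln d)/2} − 2 · d^{−ln d}. -/
open MeasureTheory ProbabilityTheory Real Finset
open scoped RealInnerProductSpace

/-- The `j`-th component of a `k`-class two-layer network with weights `w`. -/
noncomputable def fClass {d k h : ℕ} (w : Fin k → Fin h → EuclideanSpace ℝ (Fin d))
    (j : Fin k) (x : EuclideanSpace ℝ (Fin d)) : ℝ :=
  (1 / h) * ∑ r : Fin h, relu ⟪w j r, x⟫

/-- The softmax probability of class `j`. -/
noncomputable def pClass {d k h : ℕ} (w : Fin k → Fin h → EuclideanSpace ℝ (Fin d))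
    (j : Fin k) (x : EuclideanSpace ℝ (Fin d)) : ℝ :=
  Real.exp (fClass w j x) / ∑ l : Fin k, Real.exp (fClass w l x)

/-- The binary readout of the `k`-class network. -/
noncomputable def FbinaryClass {d k h : ℕ} (w : Fin k → Fin h → EuclideanSpace ℝ (Fin d))
    (s : Fin k → ℝ) (x : EuclideanSpace ℝ (Fin d)) : ℝ :=
  ∑ j ∈ univ.filter (fun j => s j = 1), pClass w j x -
    ∑ j ∈ univ.filter (fun j => s j = -1), pClass w j x


open scoped ENNReal NNReal

lemma integral_gaussian01 (g : ℝ → ℝ) :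
    ∫ x, g x ∂(gaussianReal 0 1) = ∫ x, gaussianPDFReal 0 1 x * g x := by
  rw [gaussianReal_of_var_ne_zero _ one_ne_zero]
  have h : (gaussianPDF 0 1) = fun a => ((fun x => (gaussianPDFReal 0 1 x).toNNReal) a : ℝ≥0∞) := rfl
  rw [h, integral_withDensity_eq_integral_smul
    ((measurable_gaussianPDFReal 0 1).real_toNNReal)]
  congr 1; ext x
  simp [NNReal.smul_def, Real.coe_toNNReal _ (gaussianPDFReal_nonneg 0 1 x)]


lemma gpdf01 (x : ℝ) : gaussianPDFReal 0 1 x = (Real.sqrt (2*π))⁻¹ * Real.exp (-(x^2)/2) := by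
  simp [gaussianPDFReal]

lemma gauss_shift (c : ℝ) (x : ℝ) :
    gaussianPDFReal 0 1 x * exp (c*x)
      = (Real.sqrt (2*π))⁻¹ * exp (c^2/2) * exp (-(2⁻¹) * (x - c)^2) := by
  rw [gpdf01, mul_assoc, ← Real.exp_add, mul_assoc, ← Real.exp_add]
  congr 2
  ring

lemma mgf01 (c : ℝ) : ∫ x, exp (c*x) ∂(gaussianReal 0 1) = exp (c^2/2) := by
  rw [integral_gaussian01]
  simp_rw [gauss_shift c]
  rw [MeasureTheory.integral_const_mul]
  rw [show (fun x => exp (-(2⁻¹) * (x - c)^2)) = fun x => (fun y => exp (-(2⁻¹) * y^2)) (x - c) from rfl]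
  rw [integral_sub_right_eq_self (fun y => exp (-(2⁻¹) * y^2)) c]
  rw [show (fun y : ℝ => exp (-(2⁻¹) * y^2)) = fun y : ℝ => exp (-(2⁻¹) * y^2) from rfl,
    integral_gaussian 2⁻¹]
  rw [show π / 2⁻¹ = 2 * π by ring]
  field_simp

lemma integrable_exp_mul_gaussian (c : ℝ) :
    Integrable (fun x => exp (c*x)) (gaussianReal 0 1) := by
  rw [gaussianReal_of_var_ne_zero _ one_ne_zero]
  have h : (gaussianPDF 0 1) = fun a => ((fun x => (gaussianPDFReal 0 1 x).toNNReal) a : ℝ≥0∞) := rfl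
  rw [h, integrable_withDensity_iff_integrable_smul ((measurable_gaussianPDFReal 0 1).real_toNNReal)]
  have : (fun x => ((gaussianPDFReal 0 1 x).toNNReal : ℝ≥0) • exp (c*x))
      = fun x => ((Real.sqrt (2*π))⁻¹ * exp (c^2/2)) * exp (-(2⁻¹) * ((x - c)^2)) := by
    ext x
    rw [NNReal.smul_def, Real.coe_toNNReal _ (gaussianPDFReal_nonneg 0 1 x)]
    simp only [smul_eq_mul]
    rw [gauss_shift c x]
  rw [this]
  exact ((integrable_exp_neg_mul_sq (by norm_num : (0:ℝ) < 2⁻¹)).comp_sub_right c).const_mul _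

lemma chisq_mgf01 : ∫ x, exp (x^2/4) ∂(gaussianReal 0 1) = Real.sqrt 2 := by
  rw [integral_gaussian01]
  have : ∀ x : ℝ, gaussianPDFReal 0 1 x * exp (x^2/4) = (Real.sqrt (2*π))⁻¹ * exp (-(4⁻¹) * x^2) := by
    intro x
    rw [gpdf01, mul_assoc, ← Real.exp_add]
    congr 2
    ring
  simp_rw [this]
  rw [MeasureTheory.integral_const_mul, integral_gaussian 4⁻¹]
  rw [← Real.sqrt_inv, ← Real.sqrt_mul (by positivity)]
  rw [show (2*π)⁻¹ * (π / 4⁻¹) = 2 by field_simp; ring]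

lemma integrable_exp_sq_quarter_gaussian :
    Integrable (fun x => exp (x^2/4)) (gaussianReal 0 1) := by
  rw [gaussianReal_of_var_ne_zero _ one_ne_zero]
  have h : (gaussianPDF 0 1) = fun a => ((fun x => (gaussianPDFReal 0 1 x).toNNReal) a : ℝ≥0∞) := rfl
  rw [h, integrable_withDensity_iff_integrable_smul ((measurable_gaussianPDFReal 0 1).real_toNNReal)]
  have : (fun x => ((gaussianPDFReal 0 1 x).toNNReal : ℝ≥0) • exp (x^2/4))
      = fun x => (Real.sqrt (2*π))⁻¹ * exp (-(4⁻¹) * (x^2)) := by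
    ext x
    rw [NNReal.smul_def, Real.coe_toNNReal _ (gaussianPDFReal_nonneg 0 1 x)]
    simp only [smul_eq_mul]
    rw [gpdf01, mul_assoc, ← Real.exp_add]
    congr 2
    ring
  rw [this]
  exact (integrable_exp_neg_mul_sq (by norm_num : (0:ℝ) < 4⁻¹)).const_mul _


lemma integral_pi_gauss (d : ℕ) (f : Fin d → ℝ → ℝ) :
    ∫ x : Fin d → ℝ, ∏ i, f i (x i) ∂(Measure.pi fun _ => gaussianReal 0 1)
      = ∏ i, ∫ x, f i x ∂(gaussianReal 0 1) := by
  letI : MeasureSpace ℝ := ⟨gaussianReal 0 1⟩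
  haveI : SigmaFinite (volume : Measure ℝ) := by
    show SigmaFinite (gaussianReal 0 1); infer_instance
  rw [show (Measure.pi fun _ : Fin d => gaussianReal 0 1) = (volume : Measure (Fin d → ℝ))
    from MeasureTheory.volume_pi.symm]
  exact MeasureTheory.integral_fintype_prod_eq_prod f

lemma integrable_pi_gauss (d : ℕ) (f : Fin d → ℝ → ℝ)
    (hf : ∀ i, Integrable (f i) (gaussianReal 0 1)) :
    Integrable (fun x : Fin d → ℝ => ∏ i, f i (x i))
      (Measure.pi fun _ => gaussianReal 0 1) := by
  letI : MeasureSpace ℝ := ⟨gaussianReal 0 1⟩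
  haveI : SigmaFinite (volume : Measure ℝ) := by
    show SigmaFinite (gaussianReal 0 1); infer_instance
  rw [show (Measure.pi fun _ : Fin d => gaussianReal 0 1) = (volume : Measure (Fin d → ℝ))
    from MeasureTheory.volume_pi.symm]
  exact Integrable.fintype_prod (f := f) hf

lemma inner_euclid {d : ℕ} (u ξ : EuclideanSpace ℝ (Fin d)) :
    ⟪u, ξ⟫ = ∑ i, u i * ξ i := by
  simp [PiLp.inner_apply, RCLike.inner_apply, conj_trivial, mul_comm]

lemma prob_stdGaussian (d : ℕ) : IsProbabilityMeasure (stdGaussian d) := by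
  have : IsProbabilityMeasure (Measure.pi fun _ : Fin d => gaussianReal 0 1) :=
    MeasureTheory.Measure.pi.instIsProbabilityMeasure (fun _ => gaussianReal 0 1)
  exact Measure.isProbabilityMeasure_map (MeasurableEquiv.toLp 2 (Fin d → ℝ)).measurable.aemeasurable

lemma chernoff_linear (d : ℕ) (hd : 1 ≤ d) (u : EuclideanSpace ℝ (Fin d))
    (hu2 : ∑ i, u i ^ 2 = (d:ℝ)) (t : ℝ) (ht : 0 < t) :
    stdGaussian d {ξ | t ≤ ⟪u, ξ⟫} ≤ ENNReal.ofReal (exp (-(t^2) / (2*d))) := by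
  haveI := prob_stdGaussian d
  have hd0 : (0:ℝ) < d := by exact_mod_cast Nat.lt_of_lt_of_le Nat.zero_lt_one hd
  set s : ℝ := t / d with hs
  have hs0 : 0 < s := div_pos ht hd0
  have heq : (fun ξ : EuclideanSpace ℝ (Fin d) => exp (s * ⟪u, ξ⟫))
      = fun ξ : EuclideanSpace ℝ (Fin d) => ∏ i, exp (s * u i * ξ i) := by
    ext ξ
    rw [inner_euclid, Finset.mul_sum, Real.exp_sum]
    exact Finset.prod_congr rfl fun i _ => by ring_nf
  have hFint : Integrable (fun ξ : EuclideanSpace ℝ (Fin d) => exp (s * ⟪u, ξ⟫))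
      (stdGaussian d) := by
    rw [heq, _root_.stdGaussian, MeasureTheory.integrable_map_equiv]
    exact integrable_pi_gauss d (fun i x => exp (s * u i * x)) (fun i => integrable_exp_mul_gaussian (s * u i))
  have hInt : ∫ ξ, exp (s * ⟪u, ξ⟫) ∂(stdGaussian d) = exp (s^2 * d / 2) := by
    rw [heq]
    rw [_root_.stdGaussian, MeasureTheory.integral_map_equiv]
    show ∫ x : Fin d → ℝ, ∏ i, exp (s * u i * x i) ∂(Measure.pi fun _ : Fin d => gaussianReal 0 1) = _
    rw [integral_pi_gauss d (fun i x => exp (s * u i * x))]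
    rw [Finset.prod_congr rfl fun i (_ : i ∈ Finset.univ) => mgf01 (s * u i)]
    rw [← Real.exp_sum]
    congr 1
    have : ∑ i, (s * u i)^2 / 2 = s^2 / 2 * ∑ i, u i ^ 2 := by
      rw [Finset.mul_sum]
      exact Finset.sum_congr rfl fun i _ => by ring
    rw [this, hu2]; ring
  have key := mul_meas_ge_le_integral_of_nonneg (μ := stdGaussian d)
    (f := fun ξ => exp (s * ⟪u, ξ⟫))
    (Filter.Eventually.of_forall fun ξ => (Real.exp_pos _).le) hFint (exp (s*t))
  rw [hInt] at key
  have hsub : {ξ : EuclideanSpace ℝ (Fin d) | t ≤ ⟪u, ξ⟫}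
      ⊆ {ξ | exp (s*t) ≤ exp (s * ⟪u, ξ⟫)} := fun ξ hξ =>
    Real.exp_le_exp.2 (mul_le_mul_of_nonneg_left hξ hs0.le)
  refine le_trans (measure_mono hsub) ?_
  set A := {ξ : EuclideanSpace ℝ (Fin d) | exp (s*t) ≤ exp (s * ⟪u, ξ⟫)}
  have hA : (stdGaussian d) A = ENNReal.ofReal ((stdGaussian d A).toReal) :=
    (ENNReal.ofReal_toReal (measure_ne_top _ _)).symm
  rw [hA]
  apply ENNReal.ofReal_le_ofReal
  have h1 : ((stdGaussian d) A).toReal ≤ exp (s^2 * d / 2) / exp (s*t) := by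
    rw [le_div_iff₀ (Real.exp_pos _), ← measureReal_def]
    linarith [key]
  refine h1.trans ?_
  rw [← Real.exp_sub]
  apply Real.exp_le_exp.2
  rw [hs]
  rw [show (t/d)^2 * d / 2 - t/d * t = -(t^2) / (2*d) by field_simp; ring]

lemma chernoff_chisq (d : ℕ) (hd : 1 ≤ d) :
    stdGaussian d {ξ : EuclideanSpace ℝ (Fin d) | 2*(d:ℝ) ≤ ∑ i, ξ i^2}
      ≤ ENNReal.ofReal ((Real.sqrt 2 * exp (-(2⁻¹:ℝ)))^d) := by
  haveI := prob_stdGaussian d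
  have heq : (fun ξ : EuclideanSpace ℝ (Fin d) => exp ((∑ i, ξ i^2) / 4))
      = fun ξ : EuclideanSpace ℝ (Fin d) => ∏ i, exp (ξ i^2 / 4) := by
    ext ξ
    rw [Finset.sum_div, Real.exp_sum]
  have hFint : Integrable (fun ξ : EuclideanSpace ℝ (Fin d) => exp ((∑ i, ξ i^2) / 4))
      (stdGaussian d) := by
    rw [heq, _root_.stdGaussian, MeasureTheory.integrable_map_equiv]
    exact integrable_pi_gauss d (fun _ x => exp (x^2 / 4)) (fun i => integrable_exp_sq_quarter_gaussian)
  have hInt : ∫ ξ, exp ((∑ i, ξ i^2) / 4) ∂(stdGaussian d) = (Real.sqrt 2)^d := by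
    rw [heq]
    rw [_root_.stdGaussian, MeasureTheory.integral_map_equiv]
    show ∫ x : Fin d → ℝ, ∏ i, exp (x i^2 / 4) ∂(Measure.pi fun _ : Fin d => gaussianReal 0 1) = _
    rw [integral_pi_gauss d (fun _ x => exp (x^2 / 4))]
    rw [Finset.prod_congr rfl fun i (_ : i ∈ Finset.univ) => chisq_mgf01]
    simp
  have key := mul_meas_ge_le_integral_of_nonneg (μ := stdGaussian d)
    (f := fun ξ => exp ((∑ i, ξ i^2) / 4))
    (Filter.Eventually.of_forall fun ξ => (Real.exp_pos _).le) hFint (exp (d/2))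
  rw [hInt] at key
  have hsub : {ξ : EuclideanSpace ℝ (Fin d) | 2*(d:ℝ) ≤ ∑ i, ξ i^2}
      ⊆ {ξ | exp (d/2) ≤ exp ((∑ i, ξ i^2) / 4)} := fun ξ hξ =>
    Real.exp_le_exp.2 (by simp only [Set.mem_setOf_eq] at hξ; linarith)
  refine le_trans (measure_mono hsub) ?_
  set A := {ξ : EuclideanSpace ℝ (Fin d) | exp (d/2) ≤ exp ((∑ i, ξ i^2) / 4)}
  rw [(ENNReal.ofReal_toReal (measure_ne_top (stdGaussian d) A)).symm]
  apply ENNReal.ofReal_le_ofReal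
  have h1 : ((stdGaussian d) A).toReal ≤ (Real.sqrt 2)^d / exp (d/2) := by
    rw [le_div_iff₀ (Real.exp_pos _), ← measureReal_def]
    linarith [key]
  refine h1.trans (le_of_eq ?_)
  rw [mul_pow, ← Real.exp_nat_mul]
  rw [div_eq_mul_inv, ← Real.exp_neg]
  congr 1
  push_cast
  ring
lemma det_good (d k h : ℕ) (hd : 2 ≤ d) (hk : 1 ≤ k) (hh : 1 ≤ h)
    (hlog : 10 * Real.log d ≤ Real.sqrt d)
    (μ : Fin k → EuclideanSpace ℝ (Fin d))
    (hnorm : ∀ j, ‖μ j‖ = Real.sqrt d)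
    (horth : ∀ i j, i ≠ j → ⟪μ i, μ j⟫ = 0)
    (s : Fin k → ℝ) (hs : ∀ j, s j = 1 ∨ s j = -1)
    (w : Fin k → Fin h → EuclideanSpace ℝ (Fin d))
    (lam eps : ℝ) (heps : 0 ≤ eps) (hlam : 2 * Real.log k + 10 * eps + 2 ≤ lam)
    (hw : ∀ j r, ‖w j r - (lam / d) • μ j‖ ≤ eps / Real.sqrt d)
    (ξ : EuclideanSpace ℝ (Fin d))
    (hA : ∀ j, |⟪μ j, ξ⟫| ≤ Real.sqrt d * Real.log d)
    (hB : ‖ξ‖^2 ≤ 2*d)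
    (J : Fin k) (ρ : EuclideanSpace ℝ (Fin d)) (hρ : ‖ρ‖ ≤ Real.sqrt d / 10) :
    sgn (FbinaryClass w s (μ J + ξ + ρ)) = s J := by
  have hd2 : (2:ℝ) ≤ d := by exact_mod_cast hd
  have hd0 : (0:ℝ) < d := by linarith
  have hsd0 : 0 < Real.sqrt d := Real.sqrt_pos.2 hd0
  have hsd2 : Real.sqrt d * Real.sqrt d = d := Real.mul_self_sqrt hd0.le
  have hlogd0 : 0 ≤ Real.log d := Real.log_nonneg (by linarith)
  have hlogk0 : 0 ≤ Real.log k := Real.log_nonneg (by exact_mod_cast hk)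
  have hlam2 : 2 ≤ lam := by linarith
  set x : EuclideanSpace ℝ (Fin d) := μ J + ξ + ρ with hx
  -- norm of ξ
  have hξ : ‖ξ‖ ≤ 3/2 * Real.sqrt d := by
    nlinarith [norm_nonneg ξ, Real.sqrt_nonneg (d:ℝ)]
  -- norm of x
  have hxnorm : ‖x‖ ≤ 3 * Real.sqrt d := by
    calc ‖x‖ ≤ ‖μ J + ξ‖ + ‖ρ‖ := norm_add_le _ _
      _ ≤ ‖μ J‖ + ‖ξ‖ + ‖ρ‖ := by linarith [norm_add_le (μ J) ξ]
      _ ≤ Real.sqrt d + 3/2 * Real.sqrt d + Real.sqrt d / 10 := by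
          rw [hnorm]; linarith
      _ ≤ 3 * Real.sqrt d := by linarith
  -- error bound
  have herr : ∀ j r, |⟪w j r, x⟫ - lam / d * ⟪μ j, x⟫| ≤ 3 * eps := by
    intro j r
    have h1 : ⟪w j r, x⟫ - lam / d * ⟪μ j, x⟫ = ⟪w j r - (lam / d) • μ j, x⟫ := by
      rw [inner_sub_left, real_inner_smul_left]
    rw [h1]
    calc |⟪w j r - (lam / d) • μ j, x⟫| ≤ ‖w j r - (lam / d) • μ j‖ * ‖x‖ :=
          abs_real_inner_le_norm _ _
      _ ≤ (eps / Real.sqrt d) * (3 * Real.sqrt d) := by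
          apply mul_le_mul (hw j r) hxnorm (norm_nonneg _)
          positivity
      _ = 3 * eps := by field_simp
  -- inner products with μ j
  have hμρ : ∀ j, |⟪μ j, ρ⟫| ≤ d / 10 := by
    intro j
    calc |⟪μ j, ρ⟫| ≤ ‖μ j‖ * ‖ρ‖ := abs_real_inner_le_norm _ _
      _ ≤ Real.sqrt d * (Real.sqrt d / 10) := by
          rw [hnorm]; exact mul_le_mul_of_nonneg_left hρ hsd0.le
      _ = Real.sqrt d * Real.sqrt d / 10 := by ring
      _ = d / 10 := by rw [hsd2]
  have hμξ : ∀ j, |⟪μ j, ξ⟫| ≤ d / 10 := by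
    intro j
    refine (hA j).trans ?_
    nlinarith
  have hμx : ∀ j, ⟪μ j, x⟫ = ⟪μ j, μ J⟫ + ⟪μ j, ξ⟫ + ⟪μ j, ρ⟫ := by
    intro j
    rw [hx, inner_add_right, inner_add_right]
  have hJx : 8/10 * (d:ℝ) ≤ ⟪μ J, x⟫ := by
    have h1 : ⟪μ J, μ J⟫ = (d:ℝ) := by
      rw [real_inner_self_eq_norm_sq, hnorm, Real.sq_sqrt hd0.le]
    have h2 := abs_le.1 (hμξ J)
    have h3 := abs_le.1 (hμρ J)
    rw [hμx, h1]
    linarith [h2.1, h3.1]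
  have hjx : ∀ j, j ≠ J → ⟪μ j, x⟫ ≤ 2/10 * (d:ℝ) := by
    intro j hj
    have h2 := abs_le.1 (hμξ j)
    have h3 := abs_le.1 (hμρ j)
    rw [hμx, horth j J hj]
    linarith [h2.2, h3.2]
  -- bounds on fClass
  have hfJ : 8/10 * lam - 3 * eps ≤ fClass w J x := by
    have hr : ∀ r : Fin h, 8/10 * lam - 3 * eps ≤ relu ⟪w J r, x⟫ := by
      intro r
      have h1 := abs_le.1 (herr J r)
      have h2 : lam / d * (8/10 * d) ≤ lam / d * ⟪μ J, x⟫ :=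
        mul_le_mul_of_nonneg_left hJx (by positivity)
      have h3 : lam / d * (8/10 * d) = 8/10 * lam := by field_simp
      refine le_trans ?_ (le_max_left _ _)
      linarith [h1.1]
    unfold fClass
    have hsum : (h:ℝ) * (8/10 * lam - 3 * eps) ≤ ∑ r : Fin h, relu ⟪w J r, x⟫ := by
      calc (h:ℝ) * (8/10 * lam - 3 * eps) = ∑ _r : Fin h, (8/10 * lam - 3 * eps) := by
            rw [Finset.sum_const, card_univ, Fintype.card_fin, nsmul_eq_mul]
        _ ≤ _ := Finset.sum_le_sum fun r _ => hr r
    have hh0 : (0:ℝ) < h := by exact_mod_cast hh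
    calc 8/10 * lam - 3 * eps = (1/(h:ℝ)) * ((h:ℝ) * (8/10 * lam - 3 * eps)) := by
          field_simp
      _ ≤ (1/(h:ℝ)) * ∑ r : Fin h, relu ⟪w J r, x⟫ :=
          mul_le_mul_of_nonneg_left hsum (by positivity)
  have hfj : ∀ j, j ≠ J → fClass w j x ≤ 2/10 * lam + 3 * eps := by
    intro j hj
    have hub : (0:ℝ) ≤ 2/10 * lam + 3 * eps := by linarith
    have hr : ∀ r : Fin h, relu ⟪w j r, x⟫ ≤ 2/10 * lam + 3 * eps := by
      intro r
      have h1 := abs_le.1 (herr j r)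
      have h2 : lam / d * ⟪μ j, x⟫ ≤ lam / d * (2/10 * d) :=
        mul_le_mul_of_nonneg_left (hjx j hj) (by positivity)
      have h3 : lam / d * (2/10 * d) = 2/10 * lam := by field_simp
      apply max_le _ hub
      linarith [h1.2]
    unfold fClass
    have hh0 : (0:ℝ) < h := by exact_mod_cast hh
    have hsum : ∑ r : Fin h, relu ⟪w j r, x⟫ ≤ (h:ℝ) * (2/10 * lam + 3 * eps) := by
      calc ∑ r : Fin h, relu ⟪w j r, x⟫ ≤ ∑ _r : Fin h, (2/10 * lam + 3 * eps) :=
            Finset.sum_le_sum fun r _ => hr r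
        _ = (h:ℝ) * (2/10 * lam + 3 * eps) := by
            rw [Finset.sum_const, card_univ, Fintype.card_fin, nsmul_eq_mul]
    calc (1/(h:ℝ)) * ∑ r : Fin h, relu ⟪w j r, x⟫
          ≤ (1/(h:ℝ)) * ((h:ℝ) * (2/10 * lam + 3 * eps)) :=
            mul_le_mul_of_nonneg_left hsum (by positivity)
      _ = 2/10 * lam + 3 * eps := by field_simp
  -- softmax comparison
  have hcomp : ∑ l ∈ univ.erase J, Real.exp (fClass w l x) < Real.exp (fClass w J x) := by
    have hscale : (k:ℝ) - 1 < Real.exp (6/10 * lam - 6 * eps) := by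
      have h1 : Real.log k ≤ 6/10 * lam - 6 * eps := by linarith
      have h2 : (k:ℝ) ≤ Real.exp (6/10 * lam - 6 * eps) := by
        calc (k:ℝ) = Real.exp (Real.log k) := (Real.exp_log (by exact_mod_cast hk)).symm
          _ ≤ _ := Real.exp_le_exp.2 h1
      linarith
    calc ∑ l ∈ univ.erase J, Real.exp (fClass w l x)
        ≤ ∑ _l ∈ univ.erase J, Real.exp (2/10 * lam + 3 * eps) :=
          Finset.sum_le_sum fun l hl =>
            Real.exp_le_exp.2 (hfj l (Finset.ne_of_mem_erase hl))
      _ = ((k:ℝ) - 1) * Real.exp (2/10 * lam + 3 * eps) := by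
          rw [Finset.sum_const, nsmul_eq_mul, Finset.card_erase_of_mem (mem_univ J),
            card_univ, Fintype.card_fin]
          have : ((k - 1 : ℕ) : ℝ) = (k:ℝ) - 1 := by
            have : (1:ℕ) ≤ k := hk
            push_cast [this]; ring
          rw [this]
      _ < Real.exp (6/10 * lam - 6 * eps) * Real.exp (2/10 * lam + 3 * eps) := by
          apply mul_lt_mul_of_pos_right hscale (Real.exp_pos _)
      _ = Real.exp (8/10 * lam - 3 * eps) := by rw [← Real.exp_add]; ring_nf
      _ ≤ Real.exp (fClass w J x) := Real.exp_le_exp.2 hfJ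
  -- p_J > 1/2
  set S : ℝ := ∑ l : Fin k, Real.exp (fClass w l x) with hS
  have hS0 : 0 < S := Finset.sum_pos (fun l _ => Real.exp_pos _) ⟨J, mem_univ J⟩
  have hSsplit : S = Real.exp (fClass w J x) + ∑ l ∈ univ.erase J, Real.exp (fClass w l x) := by
    rw [hS, ← Finset.add_sum_erase _ _ (mem_univ J)]
  have hSlt : S < 2 * Real.exp (fClass w J x) := by rw [hSsplit]; linarith
  have hpJ : 1/2 < pClass w J x := by
    unfold pClass
    rw [lt_div_iff₀ hS0]
    linarith
  have hpnonneg : ∀ l, 0 ≤ pClass w l x := fun l =>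
    div_nonneg (Real.exp_pos _).le hS0.le
  have hpsum : ∑ l : Fin k, pClass w l x = 1 := by
    unfold pClass
    rw [← Finset.sum_div]
    exact div_self hS0.ne'
  -- partition
  have hfilter : ∑ j ∈ univ.filter (fun j => s j = 1), pClass w j x +
      ∑ j ∈ univ.filter (fun j => s j = -1), pClass w j x = 1 := by
    have hswap : (univ.filter (fun j => s j = -1)) = (univ.filter (fun j => ¬ s j = 1)) := by
      apply Finset.filter_congr
      intro j _
      rcases hs j with h1 | h1 <;> simp [h1] <;> norm_num
    rw [hswap, Finset.sum_filter_add_sum_filter_not, hpsum]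
  rcases hs J with hsJ | hsJ
  · -- s J = 1
    have hmem : J ∈ univ.filter (fun j => s j = 1) := by
      simp [hsJ]
    have hge : pClass w J x ≤ ∑ j ∈ univ.filter (fun j => s j = 1), pClass w j x :=
      Finset.single_le_sum (fun l _ => hpnonneg l) hmem
    have : 0 < FbinaryClass w s x := by
      unfold FbinaryClass
      linarith
    rw [sgn, if_pos this, hsJ]
  · -- s J = -1
    have hmem : J ∈ univ.filter (fun j => s j = -1) := by
      simp [hsJ]
    have hge : pClass w J x ≤ ∑ j ∈ univ.filter (fun j => s j = -1), pClass w j x :=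
      Finset.single_le_sum (fun l _ => hpnonneg l) hmem
    have : FbinaryClass w s x < 0 := by
      unfold FbinaryClass
      linarith
    rw [sgn, if_neg (not_lt.2 this.le), hsJ]

theorem featureDecouplingRegime_robust (d k h : ℕ) (hd : 2 ≤ d) (hk : 1 ≤ k) (hh : 1 ≤ h)
    (hlog : 10 * Real.log d ≤ Real.sqrt d)
    (μ : Fin k → EuclideanSpace ℝ (Fin d))
    (hnorm : ∀ j, ‖μ j‖ = Real.sqrt d)
    (horth : ∀ i j, i ≠ j → ⟪μ i, μ j⟫ = 0)
    (s : Fin k → ℝ) (hs : ∀ j, s j = 1 ∨ s j = -1)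
    (w : Fin k → Fin h → EuclideanSpace ℝ (Fin d))
    (lam eps : ℝ) (heps : 0 ≤ eps) (hlam : 2 * Real.log k + 10 * eps + 2 ≤ lam)
    (hw : ∀ j r, ‖w j r - (lam / d) • μ j‖ ≤ eps / Real.sqrt d) :
    ENNReal.ofReal (1 - 2 * k * (d : ℝ) ^ (-(Real.log d) / 2) -
        2 * (d : ℝ) ^ (-(Real.log d))) ≤
      (((k : ENNReal)⁻¹ • (Measure.count : Measure (Fin k))).prod (stdGaussian d))
        {p : Fin k × EuclideanSpace ℝ (Fin d) |
          ∀ ρ : EuclideanSpace ℝ (Fin d), ‖ρ‖ ≤ Real.sqrt d / 10 →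
            sgn (FbinaryClass w s (μ p.1 + p.2 + ρ)) = s p.1} := by
  haveI := prob_stdGaussian d
  have hd1 : 1 ≤ d := le_trans one_le_two hd
  have hd2 : (2:ℝ) ≤ d := by exact_mod_cast hd
  have hd0 : (0:ℝ) < d := by linarith
  have hlogd : 0 < Real.log d := Real.log_pos (by linarith)
  set t : ℝ := Real.sqrt d * Real.log d with ht
  have ht0 : 0 < t := mul_pos (Real.sqrt_pos.2 hd0) hlogd
  set E : Set (EuclideanSpace ℝ (Fin d)) :=
    {ξ | (∀ j, |⟪μ j, ξ⟫| ≤ t) ∧ ‖ξ‖^2 ≤ 2*d} with hE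
  set a : ℝ := 2 * k * (d : ℝ) ^ (-(Real.log d) / 2) with ha
  set b : ℝ := 2 * (d : ℝ) ^ (-(Real.log d)) with hb
  have ha0 : 0 ≤ a := by positivity
  have hb0 : 0 ≤ b := by positivity
  have hnormsq : ∀ ξ : EuclideanSpace ℝ (Fin d), ‖ξ‖^2 = ∑ i, ξ i^2 := fun ξ => by
    rw [EuclideanSpace.norm_eq, Real.sq_sqrt (Finset.sum_nonneg fun i _ => sq_nonneg _)]
    simp [Real.norm_eq_abs, sq_abs]
  -- subset relation
  have hsub : Set.univ ×ˢ E ⊆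
      {p : Fin k × EuclideanSpace ℝ (Fin d) |
        ∀ ρ : EuclideanSpace ℝ (Fin d), ‖ρ‖ ≤ Real.sqrt d / 10 →
          sgn (FbinaryClass w s (μ p.1 + p.2 + ρ)) = s p.1} := by
    rintro ⟨J, ξ⟩ ⟨-, hξE⟩ ρ hρ
    exact det_good d k h hd hk hh hlog μ hnorm horth s hs w lam eps heps hlam hw ξ
      hξE.1 hξE.2 J ρ hρ
  -- per-coordinate tail bound
  have hAj : ∀ j, stdGaussian d {ξ : EuclideanSpace ℝ (Fin d) | ¬ |⟪μ j, ξ⟫| ≤ t}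
      ≤ ENNReal.ofReal ((d:ℝ) ^ (-(Real.log d) / 2)) +
        ENNReal.ofReal ((d:ℝ) ^ (-(Real.log d) / 2)) := by
    intro j
    have hsum2 : ∀ u : EuclideanSpace ℝ (Fin d), ‖u‖ = Real.sqrt d →
        ∑ i, u i ^ 2 = (d:ℝ) := by
      intro u hu
      have := hnormsq u
      rw [hu, Real.sq_sqrt hd0.le] at this
      linarith
    have hexp : Real.exp (-(t^2) / (2*d)) = (d:ℝ) ^ (-(Real.log d) / 2) := by
      rw [Real.rpow_def_of_pos hd0]
      congr 1
      have : t^2 = d * (Real.log d)^2 := by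
        rw [ht, mul_pow, Real.sq_sqrt hd0.le]
      rw [this]
      field_simp
    have hc1 := chernoff_linear d hd1 (μ j) (hsum2 _ (hnorm j)) t ht0
    have hc2 : stdGaussian d {ξ : EuclideanSpace ℝ (Fin d) | t ≤ ⟪-(μ j), ξ⟫}
        ≤ ENNReal.ofReal (Real.exp (-(t^2) / (2*d))) := by
      apply chernoff_linear d hd1 (-(μ j)) _ t ht0
      have : ∀ i, (-(μ j)) i ^ 2 = (μ j) i ^ 2 := by
        intro i
        have : (-(μ j)) i = -((μ j) i) := rfl
        rw [this]; ring
      rw [Finset.sum_congr rfl fun i _ => this i]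
      exact hsum2 _ (hnorm j)
    have hset : {ξ : EuclideanSpace ℝ (Fin d) | ¬ |⟪μ j, ξ⟫| ≤ t} ⊆
        {ξ | t ≤ ⟪μ j, ξ⟫} ∪ {ξ | t ≤ ⟪-(μ j), ξ⟫} := by
      intro ξ hξ
      rw [Set.mem_setOf_eq, not_le] at hξ
      rcases (lt_abs.1 hξ) with h1 | h1
      · left; exact h1.le
      · right
        rw [Set.mem_setOf_eq, inner_neg_left]
        linarith
    refine (measure_mono hset).trans ((measure_union_le _ _).trans ?_)
    rw [hexp] at hc1 hc2
    exact add_le_add hc1 hc2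
  -- chi-square tail bound
  have hBc : stdGaussian d {ξ : EuclideanSpace ℝ (Fin d) | ¬ ‖ξ‖^2 ≤ 2*(d:ℝ)}
      ≤ ENNReal.ofReal b := by
    have hset : {ξ : EuclideanSpace ℝ (Fin d) | ¬ ‖ξ‖^2 ≤ 2*(d:ℝ)} ⊆
        {ξ : EuclideanSpace ℝ (Fin d) | 2*(d:ℝ) ≤ ∑ i, ξ i ^ 2} := by
      intro ξ hξ
      rw [Set.mem_setOf_eq, not_le] at hξ
      rw [Set.mem_setOf_eq, ← hnormsq]
      exact hξ.le
    refine (measure_mono hset).trans ((chernoff_chisq d hd1).trans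
      (ENNReal.ofReal_le_ofReal ?_))
    -- (√2 exp(-1/2))^d ≤ 2 d^(-log d)
    have hsqrt2 : Real.sqrt 2 = Real.exp (Real.log 2 * (1/2)) := by
      rw [Real.sqrt_eq_rpow, Real.rpow_def_of_pos two_pos]
    have hlhs : (Real.sqrt 2 * Real.exp (-(2⁻¹:ℝ)))^d
        = Real.exp ((Real.log 2 * (1/2) + -(2⁻¹)) * d) := by
      rw [hsqrt2, ← Real.exp_add, ← Real.exp_nat_mul]
      congr 1
      ring
    have hrhs : (d:ℝ) ^ (-(Real.log d)) = Real.exp (-(Real.log d)^2) := by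
      rw [Real.rpow_def_of_pos hd0]
      congr 1
      ring
    rw [hlhs, hb, hrhs]
    have hlog2 : Real.log 2 < 0.6931471808 := Real.log_two_lt_d9
    have hlogsq : 100 * (Real.log d)^2 ≤ d := by
      nlinarith [Real.sq_sqrt hd0.le, Real.sqrt_nonneg (d:ℝ), hlog, hlogd.le]
    have : Real.exp ((Real.log 2 * (1/2) + -(2⁻¹)) * d) ≤ Real.exp (-(Real.log d)^2) := by
      apply Real.exp_le_exp.2
      nlinarith
    nlinarith [Real.exp_pos (-(Real.log d)^2)]
  -- complement bound
  have hEc : stdGaussian d Eᶜ ≤ ENNReal.ofReal a + ENNReal.ofReal b := by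
    have hsplit : Eᶜ ⊆ (⋃ j ∈ (Finset.univ : Finset (Fin k)),
        {ξ : EuclideanSpace ℝ (Fin d) | ¬ |⟪μ j, ξ⟫| ≤ t}) ∪
        {ξ : EuclideanSpace ℝ (Fin d) | ¬ ‖ξ‖^2 ≤ 2*(d:ℝ)} := by
      intro ξ hξ
      rw [hE, Set.mem_compl_iff, Set.mem_setOf_eq, not_and_or] at hξ
      rcases hξ with h1 | h1
      · obtain ⟨j, hj⟩ := not_forall.1 h1
        exact Or.inl (Set.mem_biUnion (Finset.mem_univ j) hj)
      · exact Or.inr h1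
    refine (measure_mono hsplit).trans ((measure_union_le _ _).trans ?_)
    refine add_le_add ?_ hBc
    refine (measure_biUnion_finset_le _ _).trans ?_
    calc ∑ j ∈ Finset.univ, stdGaussian d {ξ : EuclideanSpace ℝ (Fin d) | ¬ |⟪μ j, ξ⟫| ≤ t}
        ≤ ∑ _j ∈ (Finset.univ : Finset (Fin k)),
            (ENNReal.ofReal ((d:ℝ) ^ (-(Real.log d) / 2)) +
             ENNReal.ofReal ((d:ℝ) ^ (-(Real.log d) / 2))) :=
          Finset.sum_le_sum fun j _ => hAj j
      _ = ENNReal.ofReal a := by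
          rw [Finset.sum_const, card_univ, Fintype.card_fin, ha]
          rw [← ENNReal.ofReal_add (by positivity) (by positivity)]
          rw [nsmul_eq_mul]
          rw [← ENNReal.ofReal_natCast k, ← ENNReal.ofReal_mul (by positivity)]
          congr 1
          ring
  -- assemble
  refine le_trans ?_ (measure_mono hsub)
  have hprod : (((k : ENNReal)⁻¹ • (Measure.count : Measure (Fin k))).prod (stdGaussian d))
      (Set.univ ×ˢ E) = stdGaussian d E := by
    rw [Measure.prod_prod]
    have hk0 : (k : ENNReal) ≠ 0 := Nat.cast_ne_zero.2 (by omega)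
    have : ((k : ENNReal)⁻¹ • (Measure.count : Measure (Fin k))) Set.univ = 1 := by
      rw [Measure.smul_apply, Measure.count_univ, ENat.card_eq_coe_fintype_card, ENat.toENNReal_coe, Fintype.card_fin, smul_eq_mul]
      exact ENNReal.inv_mul_cancel hk0 (ENNReal.natCast_ne_top k)
    rw [this, one_mul]
  rw [hprod]
  have h1 : (1:ℝ≥0∞) ≤ stdGaussian d E + stdGaussian d Eᶜ := by
    calc (1:ℝ≥0∞) = stdGaussian d Set.univ := measure_univ.symm
      _ ≤ stdGaussian d E + stdGaussian d Eᶜ := by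
          rw [← Set.union_compl_self E]
          exact measure_union_le _ _
  have h2 : 1 - (ENNReal.ofReal a + ENNReal.ofReal b) ≤ stdGaussian d E := by
    rw [tsub_le_iff_right]
    exact h1.trans (add_le_add le_rfl hEc)
  refine le_trans (le_of_eq ?_) h2 |>.trans le_rfl
  rw [← ENNReal.ofReal_add ha0 hb0, ← ENNReal.ofReal_one,
    ← ENNReal.ofReal_sub _ (by positivity)]
  congr 1
  rw [ha, hb]
  ring
end
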